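/- arXiv:2406.19239 — 3 statements merged into one kernel-verified Lean document; each statement's English description precedes it below -/
import Mathlib

section
/- Let A be a real m×n matrix, b ∈ ℝ^m and η ≥ 0. If x# ∈ ℝ^n is the unique minimizer of the ℓ¹-norm ‖x‖₁ over the feasible set {x ∈ ℝ^n : ‖Ax − b‖₂ ≤ η}, then x# is rank(A)-sparse, i.e. the number of nonzero entries of x# is at most the rank of A. -/
/-- ℓ¹ norm on ℝ^d. -/
noncomputable def l1 {d : ℕ} (y : Fin d → ℝ) : ℝ := ∑ j, |y j|

/-- Euclidean (ℓ²) norm on ℝ^d. -/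
noncomputable def l2 {d : ℕ} (y : Fin d → ℝ) : ℝ := Real.sqrt (∑ j, (y j) ^ 2)

lemma abs_add_small {a c : ℝ} (h : |c| < |a|) : |a + c| = |a| + Real.sign a * c := by
  rcases lt_trichotomy a 0 with ha | ha | ha
  · obtain ⟨h1, h2⟩ := abs_lt.1 h
    rw [abs_of_neg ha] at h1 h2
    rw [Real.sign_of_neg ha, abs_of_neg ha, abs_of_neg (by linarith)]
    ring
  · simp [ha] at h; exact absurd h (by simp [not_lt, abs_nonneg])
  · obtain ⟨h1, h2⟩ := abs_lt.1 h
    rw [abs_of_pos ha] at h1 h2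
    rw [Real.sign_of_pos ha, abs_of_pos ha, abs_of_pos (by linarith)]
    ring

/-- If `x#` is the unique minimizer of the ℓ¹-norm over the feasible set
`{x : ‖Ax − b‖₂ ≤ η}`, then `x#` is `rank(A)`-sparse. -/
theorem stmt_0 {m n : ℕ} (A : Matrix (Fin m) (Fin n) ℝ) (b : Fin m → ℝ)
    (η : ℝ) (hη : 0 ≤ η) (xsharp : Fin n → ℝ)
    (hfeas : l2 (A.mulVec xsharp - b) ≤ η)
    (hmin : ∀ x : Fin n → ℝ, l2 (A.mulVec x - b) ≤ η → l1 xsharp ≤ l1 x)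
    (huniq : ∀ x : Fin n → ℝ, l2 (A.mulVec x - b) ≤ η → l1 x = l1 xsharp → x = xsharp) :
    {j : Fin n | xsharp j ≠ 0}.ncard ≤ A.rank := by
  classical
  by_contra hcon
  push_neg at hcon
  set T : Finset (Fin n) := Finset.univ.filter (fun j => xsharp j ≠ 0) with hT
  have hSeq : {j : Fin n | xsharp j ≠ 0} = ↑T := by ext j; simp [hT]
  rw [hSeq, Set.ncard_coe_finset] at hcon
  -- the columns indexed by T are linearly dependent
  have hdep : ¬ LinearIndependent ℝ (fun j : T => A.transpose (j : Fin n)) := by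
    intro hli
    have h1 := finrank_span_eq_card hli
    have hle : Submodule.span ℝ (Set.range fun j : T => A.transpose (j : Fin n)) ≤
        Submodule.span ℝ (Set.range A.transpose) := by
      apply Submodule.span_mono
      rintro _ ⟨j, rfl⟩; exact ⟨j, rfl⟩
    have h2 := Submodule.finrank_mono hle
    rw [Matrix.rank_eq_finrank_span_cols, show A.col = A.transpose from rfl] at hcon
    rw [h1, Fintype.card_coe] at h2
    omega
  obtain ⟨g, hg0, i, hi⟩ := Fintype.not_linearIndependent_iff.1 hdep
  set v : Fin n → ℝ := fun j => if h : j ∈ T then g ⟨j, h⟩ else 0 with hv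
  have hvi : v (i : Fin n) ≠ 0 := by
    simpa [hv, i.2] using hi
  have hvT : ∀ j, v j ≠ 0 → xsharp j ≠ 0 := by
    intro j hj
    by_contra hx
    have : j ∉ T := by simp [hT, hx]
    simp [hv, this] at hj
  have hAv : A.mulVec v = 0 := by
    funext i'
    have h0 := congrFun hg0 i'
    simp only [Finset.sum_apply, Pi.smul_apply, Matrix.transpose_apply, smul_eq_mul,
      Pi.zero_apply] at h0
    simp only [Matrix.mulVec, dotProduct, Pi.zero_apply]
    rw [← Finset.sum_subset (Finset.subset_univ T)
      (by intro j _ hj; simp [hv, hj])]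
    rw [← Finset.sum_attach T (fun j => A i' j * v j)]
    rw [← h0]
    apply Finset.sum_congr rfl
    intro j _
    simp [hv, j.2, mul_comm]
  -- choose small step size
  have hTne : T.Nonempty := ⟨i, i.2⟩
  set ε : ℝ := T.inf' hTne (fun j => |xsharp j|) with hε
  have hεpos : 0 < ε := by
    rw [hε, Finset.lt_inf'_iff]
    intro j hj
    have : xsharp j ≠ 0 := by simpa [hT] using hj
    exact abs_pos.2 this
  set M : ℝ := 1 + ∑ j, |v j| with hM
  have hMpos : 0 < M := by
    have : (0:ℝ) ≤ ∑ j, |v j| := Finset.sum_nonneg fun j _ => abs_nonneg _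
    linarith
  have hvM : ∀ j, |v j| ≤ M := by
    intro j
    have h1 : |v j| ≤ ∑ j, |v j| :=
      Finset.single_le_sum (fun j _ => abs_nonneg (v j)) (Finset.mem_univ j)
    linarith
  set t : ℝ := ε / (2 * M) with ht
  have htpos : 0 < t := div_pos hεpos (by linarith)
  set L : ℝ := ∑ j, Real.sign (xsharp j) * v j with hL
  -- l1 expansion
  have hexp : ∀ c : ℝ, |c| = t → l1 (xsharp + c • v) = l1 xsharp + c * L := by
    intro c hc
    have hterm : ∀ j, |xsharp j + c * v j| = |xsharp j| + Real.sign (xsharp j) * (c * v j) := by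
      intro j
      by_cases hvj : v j = 0
      · simp [hvj]
      · have hjT : j ∈ T := by simp [hT, hvT j hvj]
        apply abs_add_small
        have h1 : |c * v j| = t * |v j| := by rw [abs_mul, hc]
        have h2 : t * |v j| ≤ t * M := by
          apply mul_le_mul_of_nonneg_left (hvM j) htpos.le
        have h3 : t * M = ε / 2 := by
          rw [ht]; field_simp
        have h4 : ε ≤ |xsharp j| := Finset.inf'_le _ hjT
        rw [h1]
        calc t * |v j| ≤ ε / 2 := by rw [← h3]; exact h2
          _ < ε := by linarith
          _ ≤ |xsharp j| := h4
    simp only [l1, Pi.add_apply, Pi.smul_apply, smul_eq_mul]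
    rw [Finset.sum_congr rfl (fun j _ => hterm j), Finset.sum_add_distrib, hL,
      Finset.mul_sum]
    congr 1
    apply Finset.sum_congr rfl
    intro j _
    ring
  -- feasibility of perturbations
  have hfe : ∀ c : ℝ, l2 (A.mulVec (xsharp + c • v) - b) ≤ η := by
    intro c
    have : A.mulVec (xsharp + c • v) = A.mulVec xsharp := by
      rw [Matrix.mulVec_add, Matrix.mulVec_smul, hAv, smul_zero, add_zero]
    rw [this]; exact hfeas
  have e1 := hexp t (abs_of_pos htpos)
  have e2 := hexp (-t) (by rw [abs_neg, abs_of_pos htpos])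
  have m1 := hmin _ (hfe t)
  have m2 := hmin _ (hfe (-t))
  rw [e1] at m1
  rw [e2] at m2
  have hL0 : L = 0 := by nlinarith
  have heq : l1 (xsharp + t • v) = l1 xsharp := by rw [e1, hL0]; ring
  have hx := huniq _ (hfe t) heq
  have := congrFun hx (i : Fin n)
  simp only [Pi.add_apply, Pi.smul_apply, smul_eq_mul] at this
  have : t * v (i : Fin n) = 0 := by linarith
  rcases mul_eq_zero.1 this with h | h
  · exact absurd h (ne_of_gt htpos)
  · exact hvi h
end

section
/- Let A be a real m×n matrix, b ∈ ℝ^m and η > 0, and assume the strict feasibility (Slater) condition: there exists x₀ ∈ ℝ^n with ‖Ax₀ − b‖₂ < η. If x# minimizes ‖x‖₁ over {x ∈ ℝ^n : ‖Ax − b‖₂ ≤ η}, then there exists λ ≥ 0 such that x# also minimizes the unconstrained functional x ↦ (1/2)‖x‖₁ + (λ/2)‖Ax − b‖₂² over ℝ^n. -/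
/-- squared residual -/
noncomputable def Qf {m n : ℕ} (A : Matrix (Fin m) (Fin n) ℝ) (b : Fin m → ℝ)
    (x : Fin n → ℝ) : ℝ := ∑ j, ((A.mulVec x - b) j) ^ 2

lemma Qf_nonneg {m n : ℕ} (A : Matrix (Fin m) (Fin n) ℝ) (b : Fin m → ℝ)
    (x : Fin n → ℝ) : 0 ≤ Qf A b x :=
  Finset.sum_nonneg fun _ _ => sq_nonneg _

lemma l2_eq_sqrt_Qf {m n : ℕ} (A : Matrix (Fin m) (Fin n) ℝ) (b : Fin m → ℝ)
    (x : Fin n → ℝ) : l2 (A.mulVec x - b) = Real.sqrt (Qf A b x) := rfl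

lemma l1_convex {d : ℕ} (x y : Fin d → ℝ) {t : ℝ} (h0 : 0 ≤ t) (h1 : t ≤ 1) :
    l1 ((1 - t) • x + t • y) ≤ (1 - t) * l1 x + t * l1 y := by
  simp only [l1, Finset.mul_sum]
  rw [← Finset.sum_add_distrib]
  refine Finset.sum_le_sum fun j _ => ?_
  simp only [Pi.add_apply, Pi.smul_apply, smul_eq_mul]
  calc |(1 - t) * x j + t * y j| ≤ |(1 - t) * x j| + |t * y j| := abs_add_le _ _
    _ = (1 - t) * |x j| + t * |y j| := by
        rw [abs_mul, abs_mul, abs_of_nonneg (by linarith), abs_of_nonneg h0]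

lemma mulVec_segment {m n : ℕ} (A : Matrix (Fin m) (Fin n) ℝ) (b : Fin m → ℝ)
    (u v : Fin n → ℝ) (t : ℝ) :
    A.mulVec ((1 - t) • u + t • v) - b =
      fun j => (1 - t) * (A.mulVec u - b) j + t * (A.mulVec v - b) j := by
  funext j
  simp only [Matrix.mulVec_add, Matrix.mulVec_smul, Pi.sub_apply, Pi.add_apply,
    Pi.smul_apply, smul_eq_mul]
  ring

lemma Qf_segment {m n : ℕ} (A : Matrix (Fin m) (Fin n) ℝ) (b : Fin m → ℝ)
    (u v : Fin n → ℝ) (t : ℝ) :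
    Qf A b ((1 - t) • u + t • v) =
      ∑ j, ((1 - t) * (A.mulVec u - b) j + t * (A.mulVec v - b) j) ^ 2 := by
  rw [Qf, mulVec_segment]

lemma Qf_convex {m n : ℕ} (A : Matrix (Fin m) (Fin n) ℝ) (b : Fin m → ℝ)
    (u v : Fin n → ℝ) {t : ℝ} (h0 : 0 ≤ t) (h1 : t ≤ 1) :
    Qf A b ((1 - t) • u + t • v) ≤ (1 - t) * Qf A b u + t * Qf A b v := by
  rw [Qf_segment]
  unfold Qf
  rw [Finset.mul_sum, Finset.mul_sum, ← Finset.sum_add_distrib]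
  refine Finset.sum_le_sum fun j _ => ?_
  nlinarith [sq_nonneg ((A.mulVec u - b) j - (A.mulVec v - b) j),
    mul_nonneg h0 (sub_nonneg.2 h1)]

/-- Under the Slater condition, a minimizer of the constrained LASSO is also a
minimizer of the unconstrained LASSO `x ↦ (1/2)‖x‖₁ + (λ/2)‖Ax − b‖₂²` for
some `λ ≥ 0`. -/
theorem stmt_1 {m n : ℕ} (A : Matrix (Fin m) (Fin n) ℝ) (b : Fin m → ℝ)
    (η : ℝ) (hη : 0 < η)
    (slater : ∃ x₀ : Fin n → ℝ, l2 (A.mulVec x₀ - b) < η)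
    (xsharp : Fin n → ℝ)
    (hfeas : l2 (A.mulVec xsharp - b) ≤ η)
    (hmin : ∀ x : Fin n → ℝ, l2 (A.mulVec x - b) ≤ η → l1 xsharp ≤ l1 x) :
    ∃ lam : ℝ, 0 ≤ lam ∧
      ∀ x : Fin n → ℝ,
        (1 / 2) * l1 xsharp + (lam / 2) * (l2 (A.mulVec xsharp - b)) ^ 2 ≤
          (1 / 2) * l1 x + (lam / 2) * (l2 (A.mulVec x - b)) ^ 2 := by
  obtain ⟨x₀, hx₀⟩ := slater
  set L := l1 xsharp with hL
  have hηsq : (0:ℝ) < η ^ 2 := by positivity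
  have hfeasQ : ∀ x, Qf A b x ≤ η ^ 2 → L ≤ l1 x := by
    intro x hx
    apply hmin
    rw [l2_eq_sqrt_Qf]
    calc Real.sqrt (Qf A b x) ≤ Real.sqrt (η ^ 2) := Real.sqrt_le_sqrt hx
      _ = η := Real.sqrt_sq hη.le
  have hQ_of_l2 : ∀ x, l2 (A.mulVec x - b) ≤ η → Qf A b x ≤ η ^ 2 := by
    intro x hx
    rw [l2_eq_sqrt_Qf] at hx
    nlinarith [Real.sq_sqrt (Qf_nonneg A b x), Real.sqrt_nonneg (Qf A b x)]
  have hx₀Q : Qf A b x₀ < η ^ 2 := by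
    rw [l2_eq_sqrt_Qf] at hx₀
    nlinarith [Real.sq_sqrt (Qf_nonneg A b x₀), Real.sqrt_nonneg (Qf A b x₀)]
  have hxsQ : Qf A b xsharp ≤ η ^ 2 := hQ_of_l2 _ hfeas
  -- key cross inequality
  have key : ∀ u v : Fin n → ℝ, η ^ 2 < Qf A b u → Qf A b v < η ^ 2 →
      (L - l1 u) * (η ^ 2 - Qf A b v) ≤ (l1 v - L) * (Qf A b u - η ^ 2) := by
    intro u v hu hv
    have hcont : Continuous fun t : ℝ => Qf A b ((1 - t) • u + t • v) := by
      have heq : (fun t : ℝ => Qf A b ((1 - t) • u + t • v)) =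
          fun t : ℝ => ∑ j, ((1 - t) * (A.mulVec u - b) j + t * (A.mulVec v - b) j) ^ 2 :=
        funext fun t => Qf_segment A b u v t
      rw [heq]
      exact continuous_finset_sum _ fun j _ => by fun_prop
    have e0 : ((1:ℝ) - 0) • u + (0:ℝ) • v = u := by simp
    have e1 : ((1:ℝ) - 1) • u + (1:ℝ) • v = v := by simp
    have hmem : η ^ 2 ∈ Set.Icc (Qf A b ((1 - (1:ℝ)) • u + (1:ℝ) • v))
        (Qf A b ((1 - (0:ℝ)) • u + (0:ℝ) • v)) := by
      rw [e0, e1]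
      exact ⟨hv.le, hu.le⟩
    obtain ⟨t, ht, htQ⟩ :=
      intermediate_value_Icc' (zero_le_one) hcont.continuousOn hmem
    simp only at htQ
    have ht0 : 0 < t := by
      rcases ht.1.lt_or_eq with h | h
      · exact h
      · exfalso
        rw [← h] at htQ
        rw [e0] at htQ
        linarith
    have ht1 : t < 1 := by
      rcases ht.2.lt_or_eq with h | h
      · exact h
      · exfalso
        rw [h] at htQ
        rw [e1] at htQ
        linarith
    have hfz : L ≤ l1 ((1 - t) • u + t • v) := hfeasQ _ (le_of_eq htQ)
    have hc1 : l1 ((1 - t) • u + t • v) ≤ (1 - t) * l1 u + t * l1 v :=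
      l1_convex u v ht.1 ht.2
    have hc2 : η ^ 2 ≤ (1 - t) * Qf A b u + t * Qf A b v := by
      have := Qf_convex A b u v ht.1 ht.2
      rw [htQ] at this
      exact this
    have hvfeas : L ≤ l1 v := hfeasQ v hv.le
    have h1 : (1 - t) * (L - l1 u) ≤ t * (l1 v - L) := by nlinarith
    have h2 : t * (η ^ 2 - Qf A b v) ≤ (1 - t) * (Qf A b u - η ^ 2) := by nlinarith
    have h3 : (1 - t) * (L - l1 u) * (η ^ 2 - Qf A b v) ≤
        t * (l1 v - L) * (η ^ 2 - Qf A b v) :=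
      mul_le_mul_of_nonneg_right h1 (by linarith)
    have h4 : t * (η ^ 2 - Qf A b v) * (l1 v - L) ≤
        (1 - t) * (Qf A b u - η ^ 2) * (l1 v - L) :=
      mul_le_mul_of_nonneg_right h2 (by linarith)
    nlinarith [h3, h4]
  -- the multiplier
  set S : Set ℝ :=
    insert 0 {r | ∃ u : Fin n → ℝ, η ^ 2 < Qf A b u ∧ r = (L - l1 u) / (Qf A b u - η ^ 2)}
    with hS
  have hbdd : BddAbove S := by
    refine ⟨(l1 x₀ - L) / (η ^ 2 - Qf A b x₀), ?_⟩
    rintro s (rfl | ⟨u, hu, rfl⟩)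
    · exact div_nonneg (by linarith [hfeasQ x₀ hx₀Q.le]) (by linarith)
    · exact (div_le_div_iff₀ (sub_pos.2 hu) (sub_pos.2 hx₀Q)).2 (key u x₀ hu hx₀Q)
  set lam := sSup S with hlam
  have hlam0 : 0 ≤ lam := le_csSup hbdd (Set.mem_insert _ _)
  have master : ∀ x, L - l1 x ≤ lam * (Qf A b x - η ^ 2) := by
    intro x
    rcases lt_trichotomy (Qf A b x) (η ^ 2) with h | h | h
    · have hub : lam ≤ (l1 x - L) / (η ^ 2 - Qf A b x) := by
        apply csSup_le (Set.insert_nonempty _ _)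
        rintro s (rfl | ⟨u, hu, rfl⟩)
        · exact div_nonneg (by linarith [hfeasQ x h.le]) (by linarith)
        · exact (div_le_div_iff₀ (sub_pos.2 hu) (sub_pos.2 h)).2 (key u x hu h)
      have := (le_div_iff₀ (sub_pos.2 h)).1 hub
      nlinarith
    · have h2 := hfeasQ x h.le
      nlinarith
    · have hmem : (L - l1 x) / (Qf A b x - η ^ 2) ∈ S :=
        Set.mem_insert_of_mem _ ⟨x, h, rfl⟩
      have hle := le_csSup hbdd hmem
      have hp : 0 < Qf A b x - η ^ 2 := sub_pos.2 h
      have := (div_le_iff₀ hp).1 hle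
      linarith
  refine ⟨lam, hlam0, fun x => ?_⟩
  rw [l2_eq_sqrt_Qf, l2_eq_sqrt_Qf, Real.sq_sqrt (Qf_nonneg A b xsharp),
    Real.sq_sqrt (Qf_nonneg A b x)]
  nlinarith [master x, mul_le_mul_of_nonneg_left hxsQ hlam0]
end

section
/- Let A be a real m×n matrix, b ∈ ℝ^m and η > 0, and assume there exists x₀ ∈ ℝ^n with ‖Ax₀ − b‖₂ < η. If the minimizer x# of ‖x‖₁ over {x ∈ ℝ^n : ‖Ax − b‖₂ ≤ η} exists and is unique, then there exists λ ≥ 0 such that the unconstrained LASSO functional x ↦ (1/2)‖x‖₁ + (λ/2)‖Ax − b‖₂² admits a minimizer that is rank(A)-sparse (namely x# itself). -/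
lemma l2_nonneg {d : ℕ} (y : Fin d → ℝ) : 0 ≤ l2 y := Real.sqrt_nonneg _

lemma l2_eq_norm {d : ℕ} (y : Fin d → ℝ) :
    l2 y = ‖(WithLp.equiv 2 (Fin d → ℝ)).symm y‖ := by
  rw [EuclideanSpace.norm_eq]
  simp only [l2, WithLp.equiv_symm_apply, PiLp.toLp_apply, WithLp.ofLp_toLp, Real.norm_eq_abs, sq_abs]

lemma l2_add_le {d : ℕ} (y z : Fin d → ℝ) : l2 (y + z) ≤ l2 y + l2 z := by
  simp only [l2_eq_norm, WithLp.equiv_symm_apply, WithLp.toLp_add]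
  exact norm_add_le _ _

lemma l2_smul {d : ℕ} (a : ℝ) (y : Fin d → ℝ) : l2 (a • y) = |a| * l2 y := by
  simp only [l2_eq_norm, WithLp.equiv_symm_apply, WithLp.toLp_smul, norm_smul, Real.norm_eq_abs]

lemma l1_combo {d : ℕ} (a c : ℝ) (ha : 0 ≤ a) (hc : 0 ≤ c) (x y : Fin d → ℝ) :
    l1 (a • x + c • y) ≤ a * l1 x + c * l1 y := by
  simp only [l1, Finset.mul_sum, ← Finset.sum_add_distrib]
  apply Finset.sum_le_sum
  intro j _
  simp only [Pi.add_apply, Pi.smul_apply, smul_eq_mul]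
  calc |a * x j + c * y j| ≤ |a * x j| + |c * y j| := abs_add_le _ _
  _ = a * |x j| + c * |y j| := by
      rw [abs_mul, abs_mul, abs_of_nonneg ha, abs_of_nonneg hc]

lemma abs_add_abs_sub_eq (a b : ℝ) (h : |b| ≤ |a|) : |a + b| + |a - b| = 2 * |a| := by
  rcases le_or_gt 0 a with ha | ha
  · rw [abs_of_nonneg ha] at h
    have h' := abs_le.mp h
    rw [abs_of_nonneg ha, abs_of_nonneg (by linarith : (0:ℝ) ≤ a + b),
      abs_of_nonneg (by linarith : (0:ℝ) ≤ a - b)]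
    ring
  · rw [abs_of_neg ha] at h
    have h' := abs_le.mp h
    rw [abs_of_neg ha, abs_of_nonpos (by linarith : a + b ≤ 0),
      abs_of_nonpos (by linarith : a - b ≤ 0)]
    ring

lemma combo_lt (a c p q r : ℝ) (ha : 0 ≤ a) (hc : 0 ≤ c) (hac : a + c = 1)
    (hp : p < r) (hq : q < r) : a * p + c * q < r := by
  rcases lt_or_eq_of_le ha with h | h
  · have hr : a * r + c * r = r := by linear_combination r * hac
    nlinarith [mul_lt_mul_of_pos_left hp h, mul_le_mul_of_nonneg_left hq.le hc]
  · have hc1 : c = 1 := by linarith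
    rw [← h, hc1]; linarith

lemma card_le_rank {m n : ℕ} (A : Matrix (Fin m) (Fin n) ℝ) (s : Finset (Fin n))
    (h : ∀ v : Fin n → ℝ, (∀ j, j ∉ s → v j = 0) → A.mulVec v = 0 → v = 0) :
    s.card ≤ A.rank := by
  classical
  let E : ({j // j ∈ s} → ℝ) →ₗ[ℝ] (Fin n → ℝ) :=
    { toFun := fun w j => if hj : j ∈ s then w ⟨j, hj⟩ else 0
      map_add' := by intro w₁ w₂; funext j; by_cases hj : j ∈ s <;> simp [hj]
      map_smul' := by intro a w; funext j; by_cases hj : j ∈ s <;> simp [hj] }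
  have hEinj : Function.Injective E := by
    intro w₁ w₂ hw
    funext i
    have := congrFun hw i.1
    simpa [E, i.2] using this
  have hker : ∀ w, (A.mulVecLin ∘ₗ E) w = 0 → w = 0 := by
    intro w hw
    have h0 : E w = 0 := h (E w) (fun j hj => by simp [E, hj]) hw
    exact hEinj (h0.trans (map_zero E).symm)
  have hinj : Function.Injective (A.mulVecLin ∘ₗ E) :=
    LinearMap.ker_eq_bot.mp (LinearMap.ker_eq_bot'.mpr hker)
  have h1 : s.card = Module.finrank ℝ (LinearMap.range (A.mulVecLin ∘ₗ E)) := by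
    rw [LinearMap.finrank_range_of_inj hinj, Module.finrank_fintype_fun_eq_card]
    exact (Fintype.card_coe s).symm
  have h2 : LinearMap.range (A.mulVecLin ∘ₗ E) ≤ LinearMap.range A.mulVecLin :=
    LinearMap.range_comp_le_range _ _
  have h3 := Submodule.finrank_mono h2
  rw [h1]
  exact h3

set_option maxHeartbeats 1000000 in
/-- Under the Slater condition, if the constrained LASSO has a unique minimizer
`x#`, then for some `λ ≥ 0` the unconstrained LASSO functional admits a
`rank(A)`-sparse minimizer, namely `x#` itself. -/
theorem stmt_3 {m n : ℕ} (A : Matrix (Fin m) (Fin n) ℝ) (b : Fin m → ℝ)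
    (η : ℝ) (hη : 0 < η)
    (slater : ∃ x₀ : Fin n → ℝ, l2 (A.mulVec x₀ - b) < η)
    (xsharp : Fin n → ℝ)
    (hfeas : l2 (A.mulVec xsharp - b) ≤ η)
    (hmin : ∀ x : Fin n → ℝ, l2 (A.mulVec x - b) ≤ η → l1 xsharp ≤ l1 x)
    (huniq : ∀ x : Fin n → ℝ, l2 (A.mulVec x - b) ≤ η → l1 x = l1 xsharp → x = xsharp) :
    ∃ lam : ℝ, 0 ≤ lam ∧
      {j : Fin n | xsharp j ≠ 0}.ncard ≤ A.rank ∧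
      ∀ x : Fin n → ℝ,
        (1 / 2) * l1 xsharp + (lam / 2) * (l2 (A.mulVec xsharp - b)) ^ 2 ≤
          (1 / 2) * l1 x + (lam / 2) * (l2 (A.mulVec x - b)) ^ 2 := by
  classical
  obtain ⟨x₀, hx₀⟩ := slater
  -- Part 1 : sparsity
  set S : Finset (Fin n) := Finset.univ.filter (fun j => xsharp j ≠ 0) with hS
  have hsetS : {j : Fin n | xsharp j ≠ 0} = (S : Set (Fin n)) := by
    ext j; simp [hS]
  have hsparse : {j : Fin n | xsharp j ≠ 0}.ncard ≤ A.rank := by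
    rw [hsetS, Set.ncard_coe_finset]
    apply card_le_rank
    intro v hv0 hAv
    by_contra hv
    obtain ⟨j₀, hj₀⟩ : ∃ j, v j ≠ 0 := by
      by_contra hall; push_neg at hall; exact hv (funext hall)
    set F : Fin n → ℝ := fun j => if v j = 0 then 1 else |xsharp j| / |v j| with hF
    have hFpos : ∀ j, 0 < F j := by
      intro j
      by_cases hj : v j = 0
      · simp [hF, hj]
      · have hjS : j ∈ S := by
          by_contra hjS; exact hj (hv0 j hjS)
        have hxj : xsharp j ≠ 0 := by simpa [hS] using hjS
        simp only [hF, hj, if_false]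
        exact div_pos (abs_pos.mpr hxj) (abs_pos.mpr hj)
    set t : ℝ := Finset.univ.inf' (Finset.univ_nonempty_iff.mpr ⟨j₀⟩) F with ht
    have htpos : 0 < t := by
      rw [ht, Finset.lt_inf'_iff]
      intro j _; exact hFpos j
    have hbound : ∀ j, |t * v j| ≤ |xsharp j| := by
      intro j
      by_cases hj : v j = 0
      · simp [hj]
      · have hle : t ≤ |xsharp j| / |v j| := by
          have := Finset.inf'_le F (Finset.mem_univ j)
          simpa only [ht, hF, hj, if_false] using this
        rw [abs_mul, abs_of_nonneg htpos.le]
        exact (le_div_iff₀ (abs_pos.mpr hj)).mp hle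
    have hfeq : A.mulVec (xsharp + t • v) = A.mulVec xsharp := by
      rw [Matrix.mulVec_add, Matrix.mulVec_smul, hAv]
      simp
    have hfeq' : A.mulVec (xsharp - t • v) = A.mulVec xsharp := by
      rw [Matrix.mulVec_sub, Matrix.mulVec_smul, hAv]
      simp
    have hfe1 : l2 (A.mulVec (xsharp + t • v) - b) ≤ η := by rw [hfeq]; exact hfeas
    have hfe2 : l2 (A.mulVec (xsharp - t • v) - b) ≤ η := by rw [hfeq']; exact hfeas
    have hsum : l1 (xsharp + t • v) + l1 (xsharp - t • v) = 2 * l1 xsharp := by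
      simp only [l1, ← Finset.sum_add_distrib, Finset.mul_sum]
      apply Finset.sum_congr rfl
      intro j _
      simp only [Pi.add_apply, Pi.sub_apply, Pi.smul_apply, smul_eq_mul]
      exact abs_add_abs_sub_eq (xsharp j) (t * v j) (hbound j)
    have hm1 := hmin _ hfe1
    have hm2 := hmin _ hfe2
    have heq1 : l1 (xsharp + t • v) = l1 xsharp := by linarith
    have := huniq _ hfe1 heq1
    have hv0' : t • v = 0 := by
      have := congrArg (fun y => y - xsharp) this
      simpa using this
    have : v = 0 := by
      have := congrFun hv0' j₀
      simp only [Pi.smul_apply, smul_eq_mul, Pi.zero_apply] at this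
      rcases mul_eq_zero.mp this with h | h
      · exact absurd h (ne_of_gt htpos)
      · exact absurd h hj₀
    exact hv this
  -- Part 2 : Lagrange multiplier via separation
  set P : ℝ := l1 xsharp with hP
  set g : (Fin n → ℝ) → ℝ := fun x => l2 (A.mulVec x - b) ^ 2 - η ^ 2 with hg
  have hgx₀ : g x₀ < 0 := by
    have h0 := l2_nonneg (A.mulVec x₀ - b)
    simp only [hg]
    nlinarith
  have hgfeas : ∀ x, g x < 0 → l2 (A.mulVec x - b) ≤ η := by
    intro x hx
    simp only [hg] at hx
    nlinarith [l2_nonneg (A.mulVec x - b)]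
  have hgsharp : g xsharp ≤ 0 := by
    simp only [hg]
    nlinarith [l2_nonneg (A.mulVec xsharp - b)]
  set C : Set (ℝ × ℝ) := {p | ∃ x : Fin n → ℝ, g x ≤ p.1 ∧ l1 x ≤ p.2} with hC
  set D : Set (ℝ × ℝ) := {p | p.1 < 0 ∧ p.2 < P} with hD
  have hgcombo : ∀ (a c : ℝ) (x y : Fin n → ℝ), 0 ≤ a → 0 ≤ c → a + c = 1 →
      g (a • x + c • y) ≤ a * g x + c * g y := by
    intro a c x y ha hc hac
    have hw : A.mulVec (a • x + c • y) - b
        = a • (A.mulVec x - b) + c • (A.mulVec y - b) := by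
      funext i
      simp only [Matrix.mulVec_add, Matrix.mulVec_smul, Pi.add_apply, Pi.sub_apply,
        Pi.smul_apply, smul_eq_mul]
      linear_combination (b i) * hac
    have h1 : l2 (A.mulVec (a • x + c • y) - b)
        ≤ a * l2 (A.mulVec x - b) + c * l2 (A.mulVec y - b) := by
      rw [hw]
      calc l2 (a • (A.mulVec x - b) + c • (A.mulVec y - b))
          ≤ l2 (a • (A.mulVec x - b)) + l2 (c • (A.mulVec y - b)) := l2_add_le _ _
        _ = a * l2 (A.mulVec x - b) + c * l2 (A.mulVec y - b) := by
            rw [l2_smul, l2_smul, abs_of_nonneg ha, abs_of_nonneg hc]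
    have h2 := l2_nonneg (A.mulVec (a • x + c • y) - b)
    have h3 := l2_nonneg (A.mulVec x - b)
    have h4 := l2_nonneg (A.mulVec y - b)
    have h5 : l2 (A.mulVec (a • x + c • y) - b) ^ 2
        ≤ (a * l2 (A.mulVec x - b) + c * l2 (A.mulVec y - b)) ^ 2 :=
      pow_le_pow_left₀ h2 h1 2
    have hc' : c = 1 - a := by linarith
    subst hc'
    simp only [hg]
    nlinarith [mul_nonneg (mul_nonneg ha hc)
      (sq_nonneg (l2 (A.mulVec x - b) - l2 (A.mulVec y - b)))]
  have hCconv : Convex ℝ C := by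
    intro p hp q hq a c ha hc hac
    obtain ⟨x, hx1, hx2⟩ := hp
    obtain ⟨y, hy1, hy2⟩ := hq
    refine ⟨a • x + c • y, ?_, ?_⟩
    · calc g (a • x + c • y) ≤ a * g x + c * g y := hgcombo a c x y ha hc hac
        _ ≤ a * p.1 + c * q.1 := by
            exact add_le_add (mul_le_mul_of_nonneg_left hx1 ha)
              (mul_le_mul_of_nonneg_left hy1 hc)
        _ = (a • p + c • q).1 := by simp [Prod.smul_fst]
    · calc l1 (a • x + c • y) ≤ a * l1 x + c * l1 y := l1_combo a c ha hc x y
        _ ≤ a * p.2 + c * q.2 := by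
            exact add_le_add (mul_le_mul_of_nonneg_left hx2 ha)
              (mul_le_mul_of_nonneg_left hy2 hc)
        _ = (a • p + c • q).2 := by simp [Prod.smul_snd]
  have hDconv : Convex ℝ D := by
    intro p hp q hq a c ha hc hac
    constructor
    · have : a * p.1 + c * q.1 < 0 := combo_lt a c p.1 q.1 0 ha hc hac hp.1 hq.1
      simpa using this
    · have : a * p.2 + c * q.2 < P := combo_lt a c p.2 q.2 P ha hc hac hp.2 hq.2
      simpa using this
  have hDopen : IsOpen D := by
    have : D = (Prod.fst ⁻¹' Set.Iio (0:ℝ)) ∩ (Prod.snd ⁻¹' Set.Iio P) := rfl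
    rw [this]
    exact (isOpen_Iio.preimage continuous_fst).inter (isOpen_Iio.preimage continuous_snd)
  have hdisj : Disjoint D C := by
    rw [Set.disjoint_left]
    rintro p ⟨hp1, hp2⟩ ⟨x, hx1, hx2⟩
    have hgx : g x < 0 := lt_of_le_of_lt hx1 hp1
    have := hmin x (hgfeas x hgx)
    linarith
  obtain ⟨f, c, hfD, hfC⟩ := geometric_hahn_banach_open hDconv hDopen hCconv hdisj
  set α : ℝ := f (1, 0) with hα
  set β : ℝ := f (0, 1) with hβ
  have hfval : ∀ p : ℝ × ℝ, f p = p.1 * α + p.2 * β := by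
    intro p
    have hp : p = p.1 • ((1:ℝ), (0:ℝ)) + p.2 • ((0:ℝ), (1:ℝ)) := by
      ext <;> simp
    rw [hp, map_add, map_smul, map_smul]
    simp [hα, hβ, smul_eq_mul]
  have hsep1 : ∀ u v : ℝ, u < 0 → v < P → u * α + v * β < c := by
    intro u v hu hv
    have := hfD (u, v) ⟨hu, hv⟩
    rwa [hfval] at this
  have hsep2 : ∀ x : Fin n → ℝ, c ≤ g x * α + l1 x * β := by
    intro x
    have := hfC (g x, l1 x) ⟨x, le_refl _, le_refl _⟩
    rwa [hfval] at this
  have hαnn : 0 ≤ α := by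
    by_contra hneg
    push_neg at hneg
    set t : ℝ := max 1 ((c - (P - 1) * β) / (-α)) with htd
    have ht : 0 < t := lt_of_lt_of_le one_pos (le_max_left _ _)
    have h1 := hsep1 (-t) (P - 1) (by linarith) (by linarith)
    have h2 : t * (-α) < c - (P - 1) * β := by linarith
    have h3 : t < (c - (P - 1) * β) / (-α) := (lt_div_iff₀ (by linarith)).mpr h2
    exact absurd h3 (not_lt.mpr (le_max_right _ _))
  have hβnn : 0 ≤ β := by
    by_contra hneg
    push_neg at hneg
    set t : ℝ := max 1 ((c + α - P * β) / (-β)) with htd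
    have ht : 0 < t := lt_of_lt_of_le one_pos (le_max_left _ _)
    have h1 := hsep1 (-1) (P - t) (by linarith) (by linarith)
    have h2 : t * (-β) < c + α - P * β := by linarith
    have h3 : t < (c + α - P * β) / (-β) := (lt_div_iff₀ (by linarith)).mpr h2
    exact absurd h3 (not_lt.mpr (le_max_right _ _))
  have hPβc : P * β ≤ c := by
    by_contra hcontra
    push_neg at hcontra
    set t : ℝ := (P * β - c) / (α + β + 1) with htd
    have hd : 0 < α + β + 1 := by linarith
    have ht : 0 < t := div_pos (by linarith) hd
    have htval : t * (α + β + 1) = P * β - c := div_mul_cancel₀ _ (ne_of_gt hd)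
    have h1 := hsep1 (-t) (P - t) (by linarith) (by linarith)
    nlinarith
  have hβpos : 0 < β := by
    rcases lt_or_eq_of_le hβnn with h | h
    · exact h
    · exfalso
      have h2 := hsep2 x₀
      rw [← h] at h2
      have hPb : P * β = 0 := by rw [← h]; ring
      have hc0 : 0 ≤ c := by linarith
      have hXle : g x₀ * α ≤ 0 := mul_nonpos_of_nonpos_of_nonneg hgx₀.le hαnn
      have hα0 : α = 0 := by
        by_contra hne
        have hpos : 0 < α := lt_of_le_of_ne hαnn (Ne.symm hne)
        have : g x₀ * α < 0 := mul_neg_of_neg_of_pos hgx₀ hpos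
        nlinarith
      have h3 := hsep1 (-1) (P - 1) (by linarith) (by linarith)
      rw [hα0, ← h] at h3
      nlinarith
  set μ : ℝ := α / β with hμ
  have hμnn : 0 ≤ μ := div_nonneg hαnn hβpos.le
  have hmul : ∀ x : Fin n → ℝ, P ≤ l1 x + μ * g x := by
    intro x
    have h2 := hsep2 x
    have hcan : μ * β = α := div_mul_cancel₀ _ (ne_of_gt hβpos)
    have hcan2 : β * (μ * g x) = α * g x := by
      calc β * (μ * g x) = μ * β * g x := by ring
      _ = α * g x := by rw [hcan]
    have h3 : 0 ≤ β * (l1 x + μ * g x - P) := by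
      have he : β * (l1 x + μ * g x - P) = β * l1 x + β * (μ * g x) - β * P := by ring
      rw [he, hcan2]
      nlinarith [hPβc, h2]
    have h4 : 0 ≤ l1 x + μ * g x - P := by
      rcases le_or_gt 0 (l1 x + μ * g x - P) with h' | h'
      · exact h'
      · exact absurd (mul_neg_of_pos_of_neg hβpos h') (not_lt.mpr h3)
    linarith
  have hcs : μ * g xsharp = 0 := by
    have h1 := hmul xsharp
    simp only [← hP] at h1
    have h2 : μ * g xsharp ≤ 0 := mul_nonpos_of_nonneg_of_nonpos hμnn hgsharp
    linarith
  refine ⟨μ, hμnn, hsparse, ?_⟩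
  intro x
  have h1 := hmul x
  simp only [hg] at h1 hcs
  nlinarith [h1, hcs]
end
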